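/- For every integer n ≥ 1 and every k with 1 ≤ k ≤ n and 2k ≤ n, the number of +1 entries of the convex ASM F_n^k equals k(n-k+1), the number of -1 entries equals (k-1)(n-k), and hence the total number of nonzeros equals 2k(n-k+1) - n. -/

import Mathlib

open Finset

/-- A line (vector) of integers is "alternating" in the ASM sense:
all prefix sums are 0 or 1, and the total sum is 1. This is equivalent to the
nonzero entries being ±1, alternating in sign, beginning and ending with +1. -/
def AltLine {n : ℕ} (v : Fin n → ℤ) : Prop :=
  (∀ t : Fin n, (∑ s ∈ Finset.univ.filter (fun s => s ≤ t), v s) = 0 ∨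
      (∑ s ∈ Finset.univ.filter (fun s => s ≤ t), v s) = 1) ∧
  (∑ s, v s) = 1

/-- Alternating sign matrix. -/
def IsAsm {n : ℕ} (A : Matrix (Fin n) (Fin n) ℤ) : Prop :=
  (∀ i, AltLine (fun j => A i j)) ∧ (∀ j, AltLine (fun i => A i j))

/-- Alternating sign hypermatrix: every line in each of the three directions alternates. -/
def IsAshm {n : ℕ} (A : Fin n → Fin n → Fin n → ℤ) : Prop :=
  (∀ j k, AltLine (fun i => A i j k)) ∧
  (∀ i k, AltLine (fun j => A i j k)) ∧
  (∀ i j, AltLine (fun k => A i j k))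

/-- The ASHM-Latin square `L(A) = 1·A₁ + 2·A₂ + ⋯ + n·Aₙ` (planes indexed from 1). -/
def Lmat {n : ℕ} (A : Fin n → Fin n → Fin n → ℤ) (i j : Fin n) : ℤ :=
  ∑ k : Fin n, ((k.1 : ℤ) + 1) * A i j k

/-- The diamond-shaped convex ASM `F_n^k` (0-indexed positions; position (i,j) here
corresponds to (i+1,j+1) in 1-indexed notation). -/
def Fmat (n k : ℕ) : Matrix (Fin n) (Fin n) ℤ :=
  fun i j =>
    if k ≤ i.1 + j.1 + 1 ∧ i.1 + j.1 + k + 1 ≤ 2 * n ∧ i.1 < j.1 + k ∧ j.1 < i.1 + k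
    then (-1) ^ (i.1 + j.1 + k + 1) else 0

lemma fmat_count_one (n k : ℕ) (hk1 : 1 ≤ k) (hkn : k ≤ n) :
    (Finset.univ.filter (fun p : Fin n × Fin n => Fmat n k p.1 p.2 = 1)).card
      = k * (n - k + 1) := by
  have h := Finset.card_bij
    (s := (Finset.univ : Finset (Fin (n - k + 1) × Fin k)))
    (t := Finset.univ.filter (fun p : Fin n × Fin n => Fmat n k p.1 p.2 = 1))
    (fun a _ => ((⟨a.1.1 + a.2.1, by have := a.1.isLt; have := a.2.isLt; omega⟩ : Fin n),
                 (⟨a.1.1 + (k - 1) - a.2.1, by have := a.1.isLt; have := a.2.isLt; omega⟩ : Fin n)))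
    ?_ ?_ ?_
  · rw [← h]; simp [Nat.mul_comm]
  · intro a _
    have h1 := a.1.isLt; have h2 := a.2.isLt
    simp only [Finset.mem_filter, Finset.mem_univ, true_and]; simp only [Fmat]
    rw [if_pos ⟨by omega, by omega, by omega, by omega⟩]
    exact Even.neg_one_pow ⟨a.1.1 + k, by omega⟩
  · intro a _ b _ hab
    have h1 := a.1.isLt; have h2 := a.2.isLt
    have h3 := b.1.isLt; have h4 := b.2.isLt
    have e1 := congrArg (fun p : Fin n × Fin n => p.1.1) hab
    have e2 := congrArg (fun p : Fin n × Fin n => p.2.1) hab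
    simp only at e1 e2
    ext <;> omega
  · intro p hp
    simp only [Finset.mem_filter, Finset.mem_univ, true_and] at hp; simp only [Fmat] at hp
    have h1 := p.1.isLt; have h2 := p.2.isLt
    split_ifs at hp with hc
    · obtain ⟨hc1, hc2, hc3, hc4⟩ := hc
      have hev : Even (p.1.1 + p.2.1 + k + 1) := by
        by_contra h
        rw [Nat.not_even_iff_odd] at h
        rw [h.neg_one_pow] at hp
        norm_num at hp
      obtain ⟨m, hm⟩ := hev
      refine ⟨(⟨(p.1.1 + p.2.1 + 1 - k) / 2, by omega⟩, ⟨(p.1.1 + k - 1 - p.2.1) / 2, by omega⟩),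
        Finset.mem_univ _, ?_⟩
      refine Prod.ext (Fin.ext ?_) (Fin.ext ?_) <;> simp only [Fin.val_mk] <;> omega
    · norm_num at hp

lemma fmat_count_neg (n k : ℕ) (hk1 : 1 ≤ k) (hkn : k ≤ n) :
    (Finset.univ.filter (fun p : Fin n × Fin n => Fmat n k p.1 p.2 = -1)).card
      = (k - 1) * (n - k) := by
  have h := Finset.card_bij
    (s := (Finset.univ : Finset (Fin (n - k) × Fin (k - 1))))
    (t := Finset.univ.filter (fun p : Fin n × Fin n => Fmat n k p.1 p.2 = -1))
    (fun a _ => ((⟨a.1.1 + a.2.1 + 1, by have := a.1.isLt; have := a.2.isLt; omega⟩ : Fin n),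
                 (⟨a.1.1 + k - 1 - a.2.1, by have := a.1.isLt; have := a.2.isLt; omega⟩ : Fin n)))
    ?_ ?_ ?_
  · rw [← h]; simp [Nat.mul_comm]
  · intro a _
    have h1 := a.1.isLt; have h2 := a.2.isLt
    simp only [Finset.mem_filter, Finset.mem_univ, true_and]; simp only [Fmat]
    rw [if_pos ⟨by omega, by omega, by omega, by omega⟩]
    exact Odd.neg_one_pow ⟨a.1.1 + k, by omega⟩
  · intro a _ b _ hab
    have h1 := a.1.isLt; have h2 := a.2.isLt
    have h3 := b.1.isLt; have h4 := b.2.isLt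
    have e1 := congrArg (fun p : Fin n × Fin n => p.1.1) hab
    have e2 := congrArg (fun p : Fin n × Fin n => p.2.1) hab
    simp only at e1 e2
    ext <;> omega
  · intro p hp
    simp only [Finset.mem_filter, Finset.mem_univ, true_and] at hp; simp only [Fmat] at hp
    have h1 := p.1.isLt; have h2 := p.2.isLt
    split_ifs at hp with hc
    · obtain ⟨hc1, hc2, hc3, hc4⟩ := hc
      have hod : Odd (p.1.1 + p.2.1 + k + 1) := by
        by_contra h
        rw [Nat.not_odd_iff_even] at h
        rw [h.neg_one_pow] at hp
        norm_num at hp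
      obtain ⟨m, hm⟩ := hod
      refine ⟨(⟨(p.1.1 + p.2.1 - k) / 2, by omega⟩, ⟨(p.1.1 + k - 2 - p.2.1) / 2, by omega⟩),
        Finset.mem_univ _, ?_⟩
      refine Prod.ext (Fin.ext ?_) (Fin.ext ?_) <;> simp only [Fin.val_mk] <;> omega

theorem stmt0 (n k : ℕ) (hk1 : 1 ≤ k) (hkn : k ≤ n) (h2k : 2 * k ≤ n) :
    (Finset.univ.filter (fun p : Fin n × Fin n => Fmat n k p.1 p.2 = 1)).card
        = k * (n - k + 1) ∧
    (Finset.univ.filter (fun p : Fin n × Fin n => Fmat n k p.1 p.2 = -1)).card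
        = (k - 1) * (n - k) ∧
    (Finset.univ.filter (fun p : Fin n × Fin n => Fmat n k p.1 p.2 ≠ 0)).card
        = 2 * k * (n - k + 1) - n := by
  have hone := fmat_count_one n k hk1 hkn
  have hneg := fmat_count_neg n k hk1 hkn
  refine ⟨hone, hneg, ?_⟩
  have htri : ∀ p : Fin n × Fin n,
      Fmat n k p.1 p.2 = 1 ∨ Fmat n k p.1 p.2 = -1 ∨ Fmat n k p.1 p.2 = 0 := by
    intro p
    unfold Fmat
    split
    · rcases Nat.even_or_odd (p.1.1 + p.2.1 + k + 1) with h | h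
      · left; exact h.neg_one_pow
      · right; left; exact h.neg_one_pow
    · right; right; rfl
  have hset : (Finset.univ.filter (fun p : Fin n × Fin n => Fmat n k p.1 p.2 ≠ 0))
      = (Finset.univ.filter (fun p : Fin n × Fin n => Fmat n k p.1 p.2 = 1))
        ∪ (Finset.univ.filter (fun p : Fin n × Fin n => Fmat n k p.1 p.2 = -1)) := by
    rw [← Finset.filter_or]
    apply Finset.filter_congr
    intro p _
    rcases htri p with h | h | h <;> simp [h]
  have hdisj : Disjoint
      (Finset.univ.filter (fun p : Fin n × Fin n => Fmat n k p.1 p.2 = 1))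
      (Finset.univ.filter (fun p : Fin n × Fin n => Fmat n k p.1 p.2 = -1)) := by
    rw [Finset.disjoint_left]
    intro p hp1 hp2
    simp only [Finset.mem_filter] at hp1 hp2
    omega
  rw [hset, Finset.card_union_of_disjoint hdisj, hone, hneg]
  have key : 2 * k * (n - k + 1) = k * (n - k + 1) + (k - 1) * (n - k) + n := by
    zify [hk1, hkn]
    ring
  omega
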